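/- arXiv:1811.01654 — 3 statements merged into one kernel-verified Lean document; each statement's English description precedes it below -/
import Mathlib

section
/- For any fixed G ∈ A, the function H ↦ η*(G,H) is multiplicative: for all nonzero monic H₁, H₂ ∈ A with monic gcd (H₁,H₂) = 1, one has η*(G, H₁H₂) = η*(G,H₁) · η*(G,H₂). -/
open Polynomial UniqueFactorizationMonoid

variable (p : ℕ) [Fact p.Prime] (F : Type) [Field F] [Fintype F] [DecidableEq F]
  [Algebra (ZMod p) F]

/-- The absolute value `|G| = q ^ deg G` of a polynomial over `𝔽_q`. -/
def anorm (G : Polynomial F) : ℕ := Fintype.card F ^ G.natDegree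

/-- `t_H(A')`: the coefficient of `T^(m-1)` in the remainder of `A'` upon division by `H`,
where `m = deg H`. -/
noncomputable def tmap (H A' : Polynomial F) : F := (A' % H).coeff (H.natDegree - 1)

/-- The additive character `E(G,H)(D) = exp(2πi · tr(t_H(G·D)) / p)`. -/
noncomputable def echar (G H D : Polynomial F) : ℂ :=
  Complex.exp (2 * Real.pi * Complex.I *
    ((Algebra.trace (ZMod p) F (tmap F H (G * D))).val : ℂ) / (p : ℂ))

open scoped Classical in
/-- `ω(G)`: the number of distinct monic irreducible divisors of `G`. -/
noncomputable def omega (G : Polynomial F) : ℕ := (normalizedFactors G).toFinset.card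

open scoped Classical in
/-- The Möbius function on `𝔽_q[T]`. -/
noncomputable def mu (G : Polynomial F) : ℤ :=
  if Squarefree G then (-1) ^ omega F G else 0

/-- The polynomial Ramanujan sum `η(G,H)`: the sum of `E(G,H)(D)` over a complete residue
system `D` modulo `H` with `(D,H) = 1`. -/
noncomputable def eta (G H : Polynomial F) : ℂ :=
  ∑' D : {D : Polynomial F // D.degree < H.degree ∧ IsCoprime D H}, echar p F G H D.1

open scoped Classical in
/-- The unitary gcd `(G,H)_*`: the monic polynomial of highest degree dividing `G` and
unitarily dividing `H`. -/
noncomputable def ugcd (G H : Polynomial F) : Polynomial F :=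
  ∏ P ∈ (normalizedFactors H).toFinset,
    if P ^ (normalizedFactors H).count P ∣ G then P ^ (normalizedFactors H).count P else 1

/-- `μ*(G) = (-1)^(ω(G))`. -/
noncomputable def muStar (G : Polynomial F) : ℤ := (-1) ^ omega F G

/-- The unitary polynomial Ramanujan sum `η*(G,H)`: the sum of `E(G,H)(D)` over a complete
residue system `D` modulo `H` with `(D,H)_* = 1`. -/
noncomputable def etaStar (G H : Polynomial F) : ℂ :=
  ∑' D : {D : Polynomial F // D.degree < H.degree ∧ ugcd F D H = 1}, echar p F G H D.1

/-! ### Auxiliary lemmas -/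

section Aux

set_option linter.unusedSectionVars false

lemma finite_aux (H : Polynomial F) (Q : Polynomial F → Prop) :
    Finite {D : Polynomial F // D.degree < H.degree ∧ Q D} := by
  have h : Finite (Polynomial.degreeLT F H.natDegree) :=
    Finite.of_equiv _ (Polynomial.degreeLTEquiv F _).toEquiv.symm
  refine Finite.of_injective (fun D => (⟨D.1,
    Polynomial.mem_degreeLT.2 (lt_of_lt_of_le D.2.1 (degree_le_natDegree))⟩ :
    Polynomial.degreeLT F H.natDegree)) ?_
  intro a b hab
  have : a.1 = b.1 := congrArg (fun z => z.1) hab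
  exact Subtype.ext this

lemma expval_add (x y : ZMod p) :
    Complex.exp (2 * Real.pi * Complex.I * (((x+y).val : ℂ)) / p) =
    Complex.exp (2 * Real.pi * Complex.I * ((x.val:ℂ)) / p) *
    Complex.exp (2 * Real.pi * Complex.I * ((y.val:ℂ)) / p) := by
  have hp : (p : ℂ) ≠ 0 := by
    exact_mod_cast (Nat.Prime.ne_zero (Fact.out : p.Prime))
  rw [← Complex.exp_add]
  have hq : (x.val + y.val : ℕ) = (x+y).val + p * ((x.val + y.val)/p) := by
    rw [ZMod.val_add]
    exact (Nat.mod_add_div _ _).symm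
  set q : ℕ := (x.val + y.val)/p with hqdef
  have hcast : ((x.val : ℂ)) + (y.val : ℂ)
      = (((x+y).val : ℂ)) + (p : ℂ) * (q : ℂ) := by
    exact_mod_cast congrArg (fun n : ℕ => (n : ℂ)) hq
  have h2 : ((p:ℂ) * (q:ℂ))/(p:ℂ) = (q:ℂ) := mul_div_cancel_left₀ _ hp
  have key : 2 * Real.pi * Complex.I * ((x.val:ℂ)) / p
      + 2 * Real.pi * Complex.I * ((y.val:ℂ)) / p
      = 2 * Real.pi * Complex.I * (((x+y).val : ℂ)) / p
        + (q : ℂ) * (2 * Real.pi * Complex.I) := by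
    calc 2 * Real.pi * Complex.I * ((x.val:ℂ)) / p
        + 2 * Real.pi * Complex.I * ((y.val:ℂ)) / p
        = 2 * Real.pi * Complex.I * (((x.val:ℂ)) + ((y.val:ℂ))) / p := by ring
      _ = 2 * Real.pi * Complex.I * ((((x+y).val : ℂ)) + (p:ℂ)*(q:ℂ)) / p := by rw [hcast]
      _ = 2 * Real.pi * Complex.I * (((x+y).val : ℂ)) / p
          + (2 * Real.pi * Complex.I) * (((p:ℂ)*(q:ℂ))/(p:ℂ)) := by ring
      _ = _ := by rw [h2]; ring
  rw [key, Complex.exp_add, Complex.exp_nat_mul_two_pi_mul_I, mul_one]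

lemma tmap_add (H A B : Polynomial F) (hH : H.Monic) :
    tmap F H (A + B) = tmap F H A + tmap F H B := by
  unfold tmap
  rw [← Polynomial.modByMonic_eq_mod _ hH, ← Polynomial.modByMonic_eq_mod _ hH,
    ← Polynomial.modByMonic_eq_mod _ hH, Polynomial.add_modByMonic, Polynomial.coeff_add]

lemma tmap_mul_left (H₁ H₂ A : Polynomial F) (h₁ : H₁.Monic) (h₂ : H₂.Monic) :
    tmap F (H₁ * H₂) (A * H₁) = tmap F H₂ A := by
  unfold tmap
  rw [← Polynomial.modByMonic_eq_mod _ (h₁.mul h₂), ← Polynomial.modByMonic_eq_mod _ h₂]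
  set R := A %ₘ H₂ with hR
  have hdeg : R.degree < H₂.degree := degree_modByMonic_lt A h₂
  have hRH : (R * H₁).degree < (H₁ * H₂).degree := by
    rcases eq_or_ne R 0 with h | h
    · rw [h, zero_mul, Polynomial.degree_zero]
      exact bot_lt_iff_ne_bot.2 (fun hb => (h₁.mul h₂).ne_zero (Polynomial.degree_eq_bot.1 hb))
    · rw [Polynomial.degree_mul, Polynomial.degree_mul, add_comm H₁.degree H₂.degree]
      exact WithBot.add_lt_add_right (fun hb => h₁.ne_zero (Polynomial.degree_eq_bot.1 hb)) hdeg
  have hmod : (A * H₁) %ₘ (H₁ * H₂) = R * H₁ := by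
    have hA : A = H₂ * (A /ₘ H₂) + R := by
      rw [hR, add_comm]; exact (Polynomial.modByMonic_add_div A H₂).symm
    have hstep : A * H₁ = (H₁ * H₂) * (A /ₘ H₂) + R * H₁ := by linear_combination H₁ * hA
    rw [hstep, Polynomial.add_modByMonic,
      (Polynomial.modByMonic_eq_zero_iff_dvd (h₁.mul h₂)).2 ⟨_, rfl⟩, zero_add,
      (Polynomial.modByMonic_eq_self_iff (h₁.mul h₂)).2 hRH]
  rw [hmod]
  rcases Nat.eq_zero_or_pos H₂.natDegree with hm | hm
  · have hone : H₂ = 1 := h₂.natDegree_eq_zero.1 hm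
    subst hone
    simp [Polynomial.modByMonic_one] at hR ⊢
    simp [hR]
  · have hnd : (H₁ * H₂).natDegree = H₁.natDegree + H₂.natDegree := h₁.natDegree_mul h₂
    have hidx : (H₁ * H₂).natDegree - 1 = H₁.natDegree + (H₂.natDegree - 1) := by omega
    rw [hidx]
    rcases eq_or_ne R 0 with h | h
    · simp [h]
    · have hRdeg : R.natDegree < H₂.natDegree := Polynomial.natDegree_lt_natDegree h hdeg
      rcases lt_or_eq_of_le (Nat.le_sub_one_of_lt hRdeg) with hlt | heq
      · rw [Polynomial.coeff_eq_zero_of_natDegree_lt hlt,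
          Polynomial.coeff_eq_zero_of_natDegree_lt ?_]
        calc (R * H₁).natDegree ≤ R.natDegree + H₁.natDegree := Polynomial.natDegree_mul_le
          _ < H₁.natDegree + (H₂.natDegree - 1) := by omega
      · rw [← heq, add_comm H₁.natDegree R.natDegree,
          Polynomial.coeff_mul_degree_add_degree, h₁.leadingCoeff, mul_one,
          Polynomial.coeff_natDegree]

lemma echar_split (G H₁ H₂ D₁ D₂ : Polynomial F) (h₁ : H₁.Monic) (h₂ : H₂.Monic) :
    echar p F G (H₁ * H₂) (D₁ * H₂ + D₂ * H₁) = echar p F G H₁ D₁ * echar p F G H₂ D₂ := by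
  unfold echar
  have ht : tmap F (H₁ * H₂) (G * (D₁ * H₂ + D₂ * H₁))
      = tmap F H₁ (G * D₁) + tmap F H₂ (G * D₂) := by
    have e1 : G * (D₁ * H₂ + D₂ * H₁) = (G * D₁) * H₂ + (G * D₂) * H₁ := by ring
    rw [e1, tmap_add F (H₁ * H₂) _ _ (h₁.mul h₂)]
    congr 1
    · rw [mul_comm H₁ H₂]; exact tmap_mul_left F H₂ H₁ (G * D₁) h₂ h₁
    · exact tmap_mul_left F H₁ H₂ (G * D₂) h₁ h₂
  rw [ht, map_add]
  exact expval_add p _ _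

open scoped Classical in
lemma ugcd_eq_one_iff (D H : Polynomial F) :
    ugcd F D H = 1 ↔
      ∀ P ∈ (normalizedFactors H).toFinset, ¬ P ^ (normalizedFactors H).count P ∣ D := by
  constructor
  · intro h P hP hdvd
    have hirr : ∀ Q ∈ (normalizedFactors H).toFinset, Irreducible Q := fun Q hQ =>
      irreducible_of_normalized_factor Q (Multiset.mem_toFinset.1 hQ)
    have hne : ∀ Q ∈ (normalizedFactors H).toFinset,
        (if Q ^ (normalizedFactors H).count Q ∣ D then Q ^ (normalizedFactors H).count Q
          else 1) ≠ 0 := by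
      intro Q hQ
      split
      · exact pow_ne_zero _ (hirr Q hQ).ne_zero
      · exact one_ne_zero
    have hdeg := congrArg Polynomial.natDegree h
    rw [ugcd, Polynomial.natDegree_prod _ _ hne, Polynomial.natDegree_one] at hdeg
    have hterm := (Finset.sum_eq_zero_iff_of_nonneg (fun Q _ => Nat.zero_le _)).1 hdeg P hP
    rw [if_pos hdvd, Polynomial.natDegree_pow] at hterm
    have hc : 0 < (normalizedFactors H).count P :=
      Multiset.count_pos.2 (Multiset.mem_toFinset.1 hP)
    have hd : 0 < P.natDegree := (hirr P hP).natDegree_pos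
    exact (Nat.mul_pos hc hd).ne' hterm
  · intro h
    rw [ugcd]
    exact Finset.prod_eq_one (fun P hP => if_neg (h P hP))

lemma pow_count_dvd (H : Polynomial F) (hH : H ≠ 0) (P : Polynomial F)
    [DecidableEq (Polynomial F)] :
    P ^ (normalizedFactors H).count P ∣ H := by
  have h1 : Multiset.replicate ((normalizedFactors H).count P) P ≤ normalizedFactors H :=
    Multiset.le_count_iff_replicate_le.1 le_rfl
  have h2 : (Multiset.replicate ((normalizedFactors H).count P) P).prod ∣
      (normalizedFactors H).prod := Multiset.prod_dvd_prod_of_le h1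
  rw [Multiset.prod_replicate] at h2
  exact h2.trans (prod_normalizedFactors hH).dvd

open scoped Classical in
lemma key_equiv (H₁ H₂ D₁ D₂ : Polynomial F) (h₁0 : H₁ ≠ 0)
    (hcop : IsCoprime H₁ H₂) (P : Polynomial F)
    (hP : P ∈ (normalizedFactors H₁).toFinset) :
    (P ^ (normalizedFactors H₁ + normalizedFactors H₂).count P ∣ D₁ * H₂ + D₂ * H₁
      ↔ P ^ (normalizedFactors H₁).count P ∣ D₁) := by
  have hPirr := irreducible_of_normalized_factor P (Multiset.mem_toFinset.1 hP)
  have hPH₁ : P ∣ H₁ := dvd_of_mem_normalizedFactors (Multiset.mem_toFinset.1 hP)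
  have hc2 : (normalizedFactors H₂).count P = 0 := by
    rw [Multiset.count_eq_zero]
    intro hmem
    exact hPirr.not_isUnit (hcop.isUnit_of_dvd' hPH₁ (dvd_of_mem_normalizedFactors hmem))
  rw [Multiset.count_add, hc2, add_zero]
  set c := (normalizedFactors H₁).count P with hc
  have hPcH : P ^ c ∣ H₁ := pow_count_dvd F H₁ h₁0 P
  have hPc_cop : IsCoprime (P ^ c) H₂ := IsCoprime.of_isCoprime_of_dvd_left hcop hPcH
  have hdvd2 : P ^ c ∣ D₂ * H₁ := hPcH.mul_left D₂
  constructor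
  · intro h
    exact hPc_cop.dvd_of_dvd_mul_right ((dvd_add_left hdvd2).mp h)
  · intro h
    exact dvd_add (h.mul_right H₂) hdvd2

open scoped Classical in
lemma ugcd_split (H₁ H₂ D₁ D₂ : Polynomial F) (h₁0 : H₁ ≠ 0) (h₂0 : H₂ ≠ 0)
    (hcop : IsCoprime H₁ H₂) :
    ugcd F (D₁ * H₂ + D₂ * H₁) (H₁ * H₂) = 1 ↔
      (ugcd F D₁ H₁ = 1 ∧ ugcd F D₂ H₂ = 1) := by
  rw [ugcd_eq_one_iff, ugcd_eq_one_iff, ugcd_eq_one_iff,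
    normalizedFactors_mul h₁0 h₂0, Multiset.toFinset_add, Finset.forall_mem_union]
  refine and_congr ?_ ?_
  · exact forall₂_congr fun P hP => not_congr (key_equiv F H₁ H₂ D₁ D₂ h₁0 hcop P hP)
  · refine forall₂_congr fun P hP => not_congr ?_
    rw [add_comm (normalizedFactors H₁) (normalizedFactors H₂),
      add_comm (D₁ * H₂) (D₂ * H₁)]
    exact key_equiv F H₂ H₁ D₂ D₁ h₂0 hcop.symm P hP

lemma degsum_lt (H₁ H₂ D₁ D₂ : Polynomial F) (h₁0 : H₁ ≠ 0) (h₂0 : H₂ ≠ 0)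
    (hd₁ : D₁.degree < H₁.degree) (hd₂ : D₂.degree < H₂.degree) :
    (D₁ * H₂ + D₂ * H₁).degree < (H₁ * H₂).degree := by
  apply lt_of_le_of_lt (Polynomial.degree_add_le _ _)
  apply max_lt
  · rw [Polynomial.degree_mul, Polynomial.degree_mul]
    exact WithBot.add_lt_add_right (by simpa [Polynomial.degree_eq_bot] using h₂0) hd₁
  · rw [Polynomial.degree_mul, Polynomial.degree_mul, add_comm H₁.degree H₂.degree]
    exact WithBot.add_lt_add_right (by simpa [Polynomial.degree_eq_bot] using h₁0) hd₂

end Aux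

/-- For any fixed `G`, the unitary polynomial Ramanujan sum `η*(G,·)` is multiplicative:
`η*(G, H₁H₂) = η*(G,H₁) · η*(G,H₂)` whenever `H₁, H₂` are nonzero monic with `(H₁,H₂) = 1`. -/
theorem etaStar_multiplicative (G H₁ H₂ : Polynomial F)
    (h₁ : H₁.Monic) (h₂ : H₂.Monic) (h₁0 : H₁ ≠ 0) (h₂0 : H₂ ≠ 0)
    (hcop : IsCoprime H₁ H₂) :
    etaStar p F G (H₁ * H₂) = etaStar p F G H₁ * etaStar p F G H₂ := by
  classical
  haveI i0 : Finite {D : Polynomial F // D.degree < (H₁ * H₂).degree ∧ ugcd F D (H₁ * H₂) = 1} :=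
    finite_aux F (H₁ * H₂) _
  haveI i1 : Finite {D : Polynomial F // D.degree < H₁.degree ∧ ugcd F D H₁ = 1} :=
    finite_aux F H₁ _
  haveI i2 : Finite {D : Polynomial F // D.degree < H₂.degree ∧ ugcd F D H₂ = 1} :=
    finite_aux F H₂ _
  haveI := Fintype.ofFinite
    {D : Polynomial F // D.degree < (H₁ * H₂).degree ∧ ugcd F D (H₁ * H₂) = 1}
  haveI := Fintype.ofFinite {D : Polynomial F // D.degree < H₁.degree ∧ ugcd F D H₁ = 1}
  haveI := Fintype.ofFinite {D : Polynomial F // D.degree < H₂.degree ∧ ugcd F D H₂ = 1}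
  rw [etaStar, etaStar, etaStar, tsum_fintype, tsum_fintype, tsum_fintype,
    Fintype.sum_mul_sum]
  have hφprop : ∀ x : {D : Polynomial F // D.degree < H₁.degree ∧ ugcd F D H₁ = 1} ×
      {D : Polynomial F // D.degree < H₂.degree ∧ ugcd F D H₂ = 1},
      (x.1.1 * H₂ + x.2.1 * H₁).degree < (H₁ * H₂).degree ∧
      ugcd F (x.1.1 * H₂ + x.2.1 * H₁) (H₁ * H₂) = 1 := by
    intro x
    exact ⟨degsum_lt F H₁ H₂ x.1.1 x.2.1 h₁0 h₂0 x.1.2.1 x.2.2.1,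
      (ugcd_split F H₁ H₂ x.1.1 x.2.1 h₁0 h₂0 hcop).2 ⟨x.1.2.2, x.2.2.2⟩⟩
  have hbij : Function.Bijective
      (fun x : {D : Polynomial F // D.degree < H₁.degree ∧ ugcd F D H₁ = 1} ×
        {D : Polynomial F // D.degree < H₂.degree ∧ ugcd F D H₂ = 1} =>
        (⟨x.1.1 * H₂ + x.2.1 * H₁, hφprop x⟩ :
          {D : Polynomial F // D.degree < (H₁ * H₂).degree ∧ ugcd F D (H₁ * H₂) = 1})) := by
    constructor
    · rintro ⟨⟨a₁, ha₁⟩, ⟨a₂, ha₂⟩⟩ ⟨⟨b₁, hb₁⟩, ⟨b₂, hb₂⟩⟩ h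
      have heq : a₁ * H₂ + a₂ * H₁ = b₁ * H₂ + b₂ * H₁ := congrArg Subtype.val h
      have hdvd : H₁ ∣ (a₁ - b₁) * H₂ := ⟨b₂ - a₂, by linear_combination heq⟩
      have h1 : H₁ ∣ a₁ - b₁ := hcop.dvd_of_dvd_mul_right hdvd
      have hdlt : (a₁ - b₁).degree < H₁.degree :=
        lt_of_le_of_lt (Polynomial.degree_sub_le _ _) (max_lt ha₁.1 hb₁.1)
      have h2 : a₁ - b₁ = 0 := Polynomial.eq_zero_of_dvd_of_degree_lt h1 hdlt
      have h3 : a₁ = b₁ := sub_eq_zero.1 h2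
      have h4 : a₂ * H₁ = b₂ * H₁ := by
        subst h3
        linear_combination heq
      have h5 : a₂ = b₂ := mul_right_cancel₀ h₁0 h4
      subst h3; subst h5
      rfl
    · rintro ⟨D, hdD, huD⟩
      obtain ⟨a, b, hab⟩ := id hcop
      set D₁ := (D * b) %ₘ H₁ with hD₁
      set D₂ := (D * a) %ₘ H₂ with hD₂
      have hd₁ : D₁.degree < H₁.degree := degree_modByMonic_lt _ h₁
      have hd₂ : D₂.degree < H₂.degree := degree_modByMonic_lt _ h₂
      have hq₁ : D₁ + H₁ * ((D * b) /ₘ H₁) = D * b := Polynomial.modByMonic_add_div _ _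
      have hq₂ : D₂ + H₂ * ((D * a) /ₘ H₂) = D * a := Polynomial.modByMonic_add_div _ _
      have key : D₁ * H₂ + D₂ * H₁ - D
          = (H₁ * H₂) * (-(((D * b) /ₘ H₁) + ((D * a) /ₘ H₂))) := by
        linear_combination H₂ * hq₁ + H₁ * hq₂ + D * hab
      have hdegdiff : (D₁ * H₂ + D₂ * H₁ - D).degree < (H₁ * H₂).degree :=
        lt_of_le_of_lt (Polynomial.degree_sub_le _ _)
          (max_lt (degsum_lt F H₁ H₂ D₁ D₂ h₁0 h₂0 hd₁ hd₂) hdD)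
      have hzero : D₁ * H₂ + D₂ * H₁ - D = 0 :=
        Polynomial.eq_zero_of_dvd_of_degree_lt ⟨_, key⟩ hdegdiff
      have hD : D₁ * H₂ + D₂ * H₁ = D := sub_eq_zero.1 hzero
      have hu : ugcd F D₁ H₁ = 1 ∧ ugcd F D₂ H₂ = 1 :=
        (ugcd_split F H₁ H₂ D₁ D₂ h₁0 h₂0 hcop).1 (by rw [hD]; exact huD)
      exact ⟨⟨⟨D₁, hd₁, hu.1⟩, ⟨D₂, hd₂, hu.2⟩⟩, Subtype.ext hD⟩
  refine ((Fintype.sum_bijective _ hbij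
    (fun x : {D : Polynomial F // D.degree < H₁.degree ∧ ugcd F D H₁ = 1} ×
      {D : Polynomial F // D.degree < H₂.degree ∧ ugcd F D H₂ = 1} =>
      echar p F G H₁ x.1.1 * echar p F G H₂ x.2.1)
    (fun D : {D : Polynomial F // D.degree < (H₁ * H₂).degree ∧ ugcd F D (H₁ * H₂) = 1} =>
      echar p F G (H₁ * H₂) D.1) ?_).symm).trans
    (Fintype.sum_prod_type
      (fun x : {D : Polynomial F // D.degree < H₁.degree ∧ ugcd F D H₁ = 1} ×
        {D : Polynomial F // D.degree < H₂.degree ∧ ugcd F D H₂ = 1} =>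
        echar p F G H₁ x.1.1 * echar p F G H₂ x.2.1))
  intro x
  exact (echar_split p F G H₁ H₂ x.1.1 x.2.1 h₁ h₂).symm
end

section
/- Let P ∈ A be monic irreducible and e ≥ 1. Then for any G ∈ A: η*(G, P^e) = |P|^e − 1 if P^e ∣ G, and η*(G, P^e) = −1 otherwise. -/
open Polynomial UniqueFactorizationMonoid

variable (p : ℕ) [Fact p.Prime] (F : Type) [Field F] [Fintype F] [DecidableEq F]
  [Algebra (ZMod p) F]

set_option linter.unusedSectionVars false in
lemma tmap_eq (H A' : Polynomial F) (hH : H.Monic) :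
    tmap F H A' = (A' %ₘ H).coeff (H.natDegree - 1) := by
  rw [tmap, Polynomial.modByMonic_eq_mod _ hH]

set_option linter.unusedSectionVars false in
lemma echar_eq_stdAddChar [NeZero p] (G H D : Polynomial F) :
    echar p F G H D = ZMod.stdAddChar (Algebra.trace (ZMod p) F (tmap F H (G * D))) := by
  rw [ZMod.stdAddChar_apply, ZMod.toCircle_apply, echar]

set_option linter.unusedSectionVars false in
open scoped Classical in
lemma ugcd_prime_pow (P : Polynomial F) (hP : P.Monic) (hirr : Irreducible P)
    (e : ℕ) (he : 1 ≤ e) (D : Polynomial F) :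
    ugcd F D (P ^ e) = if P ^ e ∣ D then P ^ e else 1 := by
  rw [ugcd, hirr.normalizedFactors_pow, hP.normalize_eq_self,
    Multiset.toFinset_replicate, if_neg (by omega : e ≠ 0), Finset.prod_singleton,
    Multiset.count_replicate_self]

open scoped Classical in
/-- For monic irreducible `P` and `e ≥ 1`: `η*(G, P^e) = |P|^e − 1` if `P^e ∣ G`,
and `η*(G, P^e) = −1` otherwise. -/
theorem etaStar_prime_pow (P : Polynomial F) (hP : P.Monic) (hirr : Irreducible P)
    (e : ℕ) (he : 1 ≤ e) (G : Polynomial F) :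
    etaStar p F G (P ^ e) =
      if P ^ e ∣ G then (anorm F P : ℂ) ^ e - 1 else -1 := by
  classical
  haveI : NeZero p := ⟨(Fact.out (p := p.Prime)).pos.ne'⟩
  set H : Polynomial F := P ^ e with hHdef
  have hHm : H.Monic := hP.pow e
  have hH0 : H ≠ 0 := hHm.ne_zero
  set n : ℕ := H.natDegree with hndef
  have hPdeg : 0 < P.natDegree := by
    rcases Nat.eq_zero_or_pos P.natDegree with h | h
    · exact absurd (hP.natDegree_eq_zero.1 h ▸ isUnit_one) hirr.not_isUnit
    · exact h
  have hnE : n = e * P.natDegree := by rw [hndef, hHdef, natDegree_pow]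
  have hn1 : 1 ≤ n := by rw [hnE]; exact Nat.one_le_iff_ne_zero.2 (by positivity)
  have hdegH : H.degree = (n : WithBot ℕ) := Polynomial.degree_eq_natDegree hH0
  have hHne1 : H ≠ 1 := by
    intro h
    exact hirr.not_isUnit (IsUnit.of_pow_eq_one h (by omega))
  -- characterization of the index set
  have hiff : ∀ D : Polynomial F,
      (D.degree < H.degree ∧ ugcd F D H = 1) ↔ (D ∈ degreeLT F n ∧ D ≠ 0) := by
    intro D
    rw [mem_degreeLT, ← hdegH]
    constructor
    · rintro ⟨h1, h2⟩
      refine ⟨h1, ?_⟩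
      rintro rfl
      rw [ugcd_prime_pow F P hP hirr e he, if_pos (dvd_zero _)] at h2
      exact hHne1 h2
    · rintro ⟨h1, h2⟩
      refine ⟨h1, ?_⟩
      rw [ugcd_prime_pow F P hP hirr e he, if_neg]
      intro hdvd
      exact h2 (eq_zero_of_dvd_of_degree_lt hdvd h1)
  haveI : Fintype (degreeLT F n) := Fintype.ofEquiv _ (degreeLTEquiv F n).toEquiv.symm
  let E : {D : Polynomial F // D.degree < H.degree ∧ ugcd F D H = 1} ≃
      {x : degreeLT F n // (x : Polynomial F) ≠ 0} :=
    { toFun := fun D => ⟨⟨D.1, ((hiff D.1).1 D.2).1⟩, ((hiff D.1).1 D.2).2⟩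
      invFun := fun x => ⟨x.1.1, (hiff x.1.1).2 ⟨x.1.2, x.2⟩⟩
      left_inv := fun D => rfl
      right_inv := fun x => rfl }
  haveI : Fintype {D : Polynomial F // D.degree < H.degree ∧ ugcd F D H = 1} :=
    Fintype.ofEquiv _ E.symm
  set f : degreeLT F n → ℂ := fun x => echar p F G H x.1 with hfdef
  have hts : etaStar p F G H = ∑ x ∈ (Finset.univ : Finset (degreeLT F n)).erase 0, f x := by
    rw [etaStar, tsum_fintype]
    have h1 : ∑ D : {D : Polynomial F // D.degree < H.degree ∧ ugcd F D H = 1}, echar p F G H D.1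
        = ∑ x : {x : degreeLT F n // (x : Polynomial F) ≠ 0}, f x.1 :=
      Fintype.sum_equiv E _ _ (fun D => rfl)
    rw [h1]
    exact (Finset.sum_subtype _ (fun x => by
      simp [Finset.mem_erase, ZeroMemClass.coe_eq_zero]) f).symm
  have hf0 : f 0 = 1 := by
    have h1 : tmap F H (G * ((0 : degreeLT F n) : Polynomial F)) = 0 := by
      rw [ZeroMemClass.coe_zero, mul_zero, tmap_eq F H 0 hHm, zero_modByMonic, coeff_zero]
    rw [hfdef]
    simp only [echar, h1, map_zero, ZMod.val_zero]
    norm_num [Complex.exp_zero]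
  have herase : ∑ x ∈ (Finset.univ : Finset (degreeLT F n)).erase 0, f x
      = (∑ x : degreeLT F n, f x) - 1 := by
    have h := Finset.sum_erase_add Finset.univ f (Finset.mem_univ (0 : degreeLT F n))
    rw [hf0] at h
    linear_combination h
  have hcard : (Fintype.card (degreeLT F n) : ℂ) = (anorm F P : ℂ) ^ e := by
    have h1 : Fintype.card (degreeLT F n) = Fintype.card F ^ n := by
      rw [Fintype.card_congr (degreeLTEquiv F n).toEquiv]
      simp [Fintype.card_fun]
    rw [h1, anorm, hnE]
    push_cast
    rw [← pow_mul, mul_comm]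
  by_cases hdvd : H ∣ G
  · rw [if_pos hdvd, hts, herase]
    have hall : ∀ x : degreeLT F n, f x = 1 := by
      intro x
      have h1 : tmap F H (G * (x : Polynomial F)) = 0 := by
        rw [tmap_eq F H _ hHm, (modByMonic_eq_zero_iff_dvd hHm).2 (hdvd.mul_right _), coeff_zero]
      rw [hfdef]
      simp only [echar, h1, map_zero, ZMod.val_zero]
      norm_num [Complex.exp_zero]
    rw [Finset.sum_congr rfl (fun x _ => hall x), Finset.sum_const, Finset.card_univ,
      nsmul_eq_mul, mul_one, hcard]
  · rw [if_neg hdvd, hts, herase]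
    -- build the additive character
    let T : degreeLT F n →+ F :=
      { toFun := fun x => tmap F H (G * (x : Polynomial F))
        map_zero' := by
          show tmap F H (G * ((0 : degreeLT F n) : Polynomial F)) = 0
          rw [ZeroMemClass.coe_zero, mul_zero, tmap_eq F H 0 hHm, zero_modByMonic, coeff_zero]
        map_add' := fun x y => by
          simp only [Submodule.coe_add, mul_add, tmap_eq F H _ hHm, add_modByMonic, coeff_add] }
    let ψ : AddChar (degreeLT F n) ℂ :=
      (ZMod.stdAddChar (N := p)).compAddMonoidHom
        ((Algebra.trace (ZMod p) F).toAddMonoidHom.comp T)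
    have hψ : ∀ x : degreeLT F n, f x = ψ x := fun x => echar_eq_stdAddChar p F G H x
    -- the character is nontrivial
    obtain ⟨y, hy⟩ := Algebra.trace_surjective (ZMod p) F 1
    set R : Polynomial F := G %ₘ H with hRdef
    have hR0 : R ≠ 0 := fun h => hdvd ((modByMonic_eq_zero_iff_dvd hHm).1 h)
    set r : ℕ := R.natDegree with hrdef
    have hrn : r < n := natDegree_lt_natDegree hR0 (degree_modByMonic_lt G hHm)
    set c : F := R.coeff r with hcdef
    have hc : c ≠ 0 := by
      rw [hcdef, hrdef]
      exact mt leadingCoeff_eq_zero.1 hR0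
    have hy0 : y ≠ 0 := by
      intro h
      rw [h, map_zero] at hy
      exact one_ne_zero hy.symm
    set a : F := c⁻¹ * y with hadef
    have ha : a ≠ 0 := by
      rw [hadef]
      exact mul_ne_zero (inv_ne_zero hc) hy0
    set k : ℕ := n - 1 - r with hkdef
    set x0 : Polynomial F := C a * X ^ k with hx0def
    have hx00 : x0 ≠ 0 := by
      rw [hx0def]
      exact mul_ne_zero (by simpa using ha) (pow_ne_zero _ X_ne_zero)
    have hx0deg : x0.degree < (n : WithBot ℕ) := by
      refine lt_of_le_of_lt (degree_C_mul_X_pow_le k a) ?_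
      exact_mod_cast (by omega : k < n)
    have hmem : x0 ∈ degreeLT F n := mem_degreeLT.2 hx0deg
    have hRx0deg : (R * x0).degree < H.degree := by
      have hnd : (R * x0).natDegree = n - 1 := by
        rw [natDegree_mul hR0 hx00, hx0def, natDegree_C_mul_X_pow k a ha]
        omega
      calc (R * x0).degree ≤ ((R * x0).natDegree : WithBot ℕ) := degree_le_natDegree
        _ < H.degree := by rw [hnd, hdegH]; exact_mod_cast (by omega : n - 1 < n)
    have hmod : (G * x0) %ₘ H = R * x0 := by
      conv_lhs => rw [← modByMonic_add_div G H]
      rw [add_mul, add_modByMonic,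
        (modByMonic_eq_zero_iff_dvd (p := H * (G /ₘ H) * x0) hHm).2 ⟨(G /ₘ H) * x0, by ring⟩,
        (modByMonic_eq_self_iff hHm).2 hRx0deg, add_zero]
    have hco : tmap F H (G * x0) = y := by
      rw [tmap_eq F H _ hHm, hmod]
      have h1 : R * x0 = C a * R * X ^ k := by rw [hx0def]; ring
      have h2 : n - 1 = r + k := by omega
      rw [h1, ← hndef, h2, coeff_mul_X_pow, coeff_C_mul, ← hcdef, hadef]
      field_simp
    have hne : ψ ≠ 1 := by
      rw [AddChar.ne_one_iff]
      refine ⟨⟨x0, hmem⟩, ?_⟩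
      show ZMod.stdAddChar (Algebra.trace (ZMod p) F (tmap F H (G * x0))) ≠ 1
      rw [hco, hy]
      intro h
      have h0 : ZMod.stdAddChar (1 : ZMod p) = ZMod.stdAddChar (0 : ZMod p) := by
        rw [h, AddChar.map_zero_eq_one]
      exact one_ne_zero (ZMod.injective_stdAddChar h0)
    have hzero : ∑ x : degreeLT F n, f x = 0 := by
      rw [Finset.sum_congr rfl (fun x _ => hψ x)]
      exact AddChar.sum_eq_zero_of_ne_one hne
    rw [hzero]
    ring
end

section
/- Let f : (A₊)^k → ℂ be multiplicative (k ≥ 1). Then Σ over all tuples (G₁,…,G_k) ∈ (A₊)^k of 2^{ω(G₁)+⋯+ω(G_k)} · |(μ_k ∗ f)(G₁,…,G_k)| / (|G₁|⋯|G_k|) is finite if and only if Σ over all tuples (G₁,…,G_k) ∈ (A₊)^k of |(μ_k ∗ f)(G₁,…,G_k)| / (|G₁|⋯|G_k|) is finite. -/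
open Polynomial UniqueFactorizationMonoid

variable (p : ℕ) [Fact p.Prime] (F : Type) [Field F] [Fintype F] [DecidableEq F]
  [Algebra (ZMod p) F]

/-- The Dirichlet convolution of `μ_k` with `f` on `k`-tuples of monic polynomials:
`(μ_k ∗ f)(G₁,…,G_k) = Σ_{D_i E_i = G_i, D_i,E_i monic} μ(D₁)⋯μ(D_k) · f(E₁,…,E_k)`. -/
noncomputable def muConv {k : ℕ} (f : (Fin k → Polynomial F) → ℂ)
    (G : Fin k → Polynomial F) : ℂ :=
  ∑' DE : {DE : (Fin k → Polynomial F) × (Fin k → Polynomial F) //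
      (∀ i, (DE.1 i).Monic) ∧ (∀ i, (DE.2 i).Monic) ∧ ∀ i, DE.1 i * DE.2 i = G i},
    (∏ i, (mu F (DE.1.1 i) : ℂ)) * f DE.1.2


set_option linter.unusedSectionVars false
set_option linter.unusedVariables false
set_option maxHeartbeats 2000000

open scoped Classical

instance : Finite (Polynomial F)ˣ := by
  apply Finite.of_injective (fun u : (Polynomial F)ˣ => (u : Polynomial F).coeff 0)
  intro u v h
  obtain ⟨r, -, hr⟩ := Polynomial.isUnit_iff.mp u.isUnit
  obtain ⟨s, -, hs⟩ := Polynomial.isUnit_iff.mp v.isUnit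
  apply Units.ext
  have hu : (u : Polynomial F) = Polynomial.C ((u : Polynomial F).coeff 0) := by
    rw [← hr]; simp
  have hv : (v : Polynomial F) = Polynomial.C ((v : Polynomial F).coeff 0) := by
    rw [← hs]; simp
  simp only at h
  rw [hu, hv, h]

lemma deFinite {k : ℕ} (G : Fin k → Polynomial F) :
    Finite {DE : (Fin k → Polynomial F) × (Fin k → Polynomial F) //
      (∀ i, (DE.1 i).Monic) ∧ (∀ i, (DE.2 i).Monic) ∧ ∀ i, DE.1 i * DE.2 i = G i} := by
  by_cases hG : ∀ i, G i ≠ 0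
  · haveI : Fintype (Polynomial F)ˣ := Fintype.ofFinite _
    haveI : ∀ i, Fintype {x : Polynomial F // x ∣ G i} :=
      fun i => UniqueFactorizationMonoid.fintypeSubtypeDvd _ (hG i)
    apply Finite.of_injective
      (f := fun DE : {DE : (Fin k → Polynomial F) × (Fin k → Polynomial F) //
      (∀ i, (DE.1 i).Monic) ∧ (∀ i, (DE.2 i).Monic) ∧ ∀ i, DE.1 i * DE.2 i = G i} =>
        (fun i => (⟨DE.1.1 i, ⟨DE.1.2 i, (DE.2.2.2 i).symm⟩⟩ : {x // x ∣ G i})))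
    intro ⟨⟨D, E⟩, hD, hE, hDE⟩ ⟨⟨D', E'⟩, hD', hE', hDE'⟩ h
    have h1 : D = D' := by
      funext i
      exact congrArg Subtype.val (congrFun h i)
    subst h1
    have h2 : E = E' := by
      funext i
      have := (hDE i).trans (hDE' i).symm
      exact mul_left_cancel₀ (hD i).ne_zero this
    simp [h2]
  · push_neg at hG
    obtain ⟨i0, hi0⟩ := hG
    have : IsEmpty {DE : (Fin k → Polynomial F) × (Fin k → Polynomial F) //
      (∀ i, (DE.1 i).Monic) ∧ (∀ i, (DE.2 i).Monic) ∧ ∀ i, DE.1 i * DE.2 i = G i} := by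
      constructor
      intro ⟨⟨D, E⟩, hD, hE, hDE⟩
      exact ((hD i0).mul (hE i0)).ne_zero ((hDE i0).trans hi0)
    exact Finite.of_subsingleton

lemma monic_of_mem_nf {G P : Polynomial F} (h : P ∈ normalizedFactors G) : P.Monic := by
  have h0 : P ≠ 0 := (prime_of_normalized_factor P h).ne_zero
  have := normalize_normalized_factor P h
  rw [← this]
  exact monic_normalize h0

lemma mem_nf {G P : Polynomial F} (hG : G ≠ 0) (hP : Prime P) (hn : normalize P = P)
    (hd : P ∣ G) : P ∈ normalizedFactors G := by
  obtain ⟨q, hq, hassoc⟩ := exists_mem_normalizedFactors_of_dvd hG hP.irreducible hd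
  have h2 := normalize_eq_normalize hassoc.dvd hassoc.symm.dvd
  rw [hn, normalize_normalized_factor q hq] at h2
  rwa [h2]

lemma omega_mul {a b : Polynomial F} (ha : a ≠ 0) (hb : b ≠ 0) (h : IsCoprime a b) :
    omega F (a * b) = omega F a + omega F b := by
  unfold omega
  rw [normalizedFactors_mul ha hb, Multiset.toFinset_add, Finset.card_union_of_disjoint]
  rw [Finset.disjoint_left]
  intro P hPa hPb
  simp only [Multiset.mem_toFinset] at hPa hPb
  exact (prime_of_normalized_factor P hPa).not_unit
    (h.isUnit_of_dvd' (dvd_of_mem_normalizedFactors hPa) (dvd_of_mem_normalizedFactors hPb))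

lemma omega_one : omega F 1 = 0 := by
  unfold omega
  rw [normalizedFactors_one]
  simp

lemma mu_one : mu F 1 = 1 := by
  unfold mu
  rw [if_pos squarefree_one, omega_one]
  simp

lemma mu_mul {a b : Polynomial F} (h : IsCoprime a b) (ha : a ≠ 0) (hb : b ≠ 0) :
    mu F (a * b) = mu F a * mu F b := by
  unfold mu
  by_cases hsa : Squarefree a <;> by_cases hsb : Squarefree b
  · rw [if_pos (squarefree_mul_iff.mpr ⟨h.isRelPrime, hsa, hsb⟩), if_pos hsa, if_pos hsb,
      omega_mul F ha hb h, pow_add]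
  all_goals {
    have hns : ¬ Squarefree (a * b) := fun hsq =>
      by have := squarefree_mul_iff.mp hsq; tauto
    rw [if_neg hns]
    first
    | rw [if_neg hsa]; ring
    | rw [if_neg hsb]; ring }

lemma muConv_one {k : ℕ} (f : (Fin k → Polynomial F) → ℂ) :
    muConv F f (fun _ => 1) = f (fun _ => 1) := by
  unfold muConv
  have hx : ((fun _ => (1:Polynomial F), fun _ => (1:Polynomial F)) :
      (Fin k → Polynomial F) × (Fin k → Polynomial F)) ∈
      {DE : (Fin k → Polynomial F) × (Fin k → Polynomial F) |
      (∀ i, (DE.1 i).Monic) ∧ (∀ i, (DE.2 i).Monic) ∧ ∀ i, DE.1 i * DE.2 i = 1} :=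
    ⟨fun _ => monic_one, fun _ => monic_one, fun _ => mul_one 1⟩
  rw [tsum_eq_single (⟨_, hx⟩ :
    {DE : (Fin k → Polynomial F) × (Fin k → Polynomial F) //
      (∀ i, (DE.1 i).Monic) ∧ (∀ i, (DE.2 i).Monic) ∧ ∀ i, DE.1 i * DE.2 i = (fun _ => 1) i})]
  · simp [mu_one]
  · intro b hb
    exfalso
    apply hb
    obtain ⟨⟨D, E⟩, hD, hE, hDE⟩ := b
    have hD1 : D = fun _ => 1 := funext fun i =>
      (hD i).eq_one_of_isUnit (IsUnit.of_mul_eq_one _ (hDE i))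
    have hE1 : E = fun _ => 1 := funext fun i =>
      (hE i).eq_one_of_isUnit (IsUnit.of_mul_eq_one _ (by rw [mul_comm]; exact hDE i))
    subst hD1; subst hE1; rfl

lemma monic_dvd_antisymm {a b : Polynomial F} (ha : a.Monic) (hb : b.Monic)
    (h1 : a ∣ b) (h2 : b ∣ a) : a = b :=
  eq_of_monic_of_associated ha hb (associated_of_dvd_dvd h1 h2)

lemma monic_split {a b x : Polynomial F} (hx : x.Monic) (hab : x ∣ a * b) :
    ∃ d e : Polynomial F, d.Monic ∧ e.Monic ∧ d ∣ a ∧ e ∣ b ∧ d * e = x := by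
  obtain ⟨d, e, hd, he, hde⟩ := exists_dvd_and_dvd_of_dvd_mul hab
  have hd0 : d ≠ 0 := fun h0 => hx.ne_zero (by rw [hde, h0, zero_mul])
  have he0 : e ≠ 0 := fun h0 => hx.ne_zero (by rw [hde, h0, mul_zero])
  refine ⟨normalize d, normalize e, monic_normalize hd0, monic_normalize he0,
    (normalize_dvd_iff).mpr hd, (normalize_dvd_iff).mpr he, ?_⟩
  rw [← normalize_mul, ← hde, hx.normalize_eq_self]

lemma muConv_mul {k : ℕ} (f : (Fin k → Polynomial F) → ℂ)
    (hmul : ∀ G H : Fin k → Polynomial F, (∀ i, (G i).Monic) → (∀ i, (H i).Monic) →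
      IsCoprime (∏ i, G i) (∏ i, H i) → f (fun i => G i * H i) = f G * f H)
    (G H : Fin k → Polynomial F) (hG : ∀ i, (G i).Monic) (hH : ∀ i, (H i).Monic)
    (hcop : IsCoprime (∏ i, G i) (∏ i, H i)) :
    muConv F f (fun i => G i * H i) = muConv F f G * muConv F f H := by
  have hdvdG : ∀ {x : Polynomial F} (i : Fin k), x ∣ G i → x ∣ ∏ j, G j :=
    fun {x} i hx => hx.trans (Finset.dvd_prod_of_mem _ (Finset.mem_univ i))
  have hdvdH : ∀ {x : Polynomial F} (i : Fin k), x ∣ H i → x ∣ ∏ j, H j :=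
    fun {x} i hx => hx.trans (Finset.dvd_prod_of_mem _ (Finset.mem_univ i))
  have hcop' : ∀ {x y : Polynomial F}, x ∣ ∏ i, G i → y ∣ ∏ i, H i → IsCoprime x y :=
    fun hx hy => (hcop.of_isCoprime_of_dvd_left hx).of_isCoprime_of_dvd_right hy
  haveI := deFinite F (fun i => G i * H i)
  haveI := deFinite F G
  haveI := deFinite F H
  haveI : Fintype {DE : (Fin k → Polynomial F) × (Fin k → Polynomial F) //
      (∀ i, (DE.1 i).Monic) ∧ (∀ i, (DE.2 i).Monic) ∧ ∀ i, DE.1 i * DE.2 i = G i * H i} :=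
    Fintype.ofFinite _
  haveI : Fintype {DE : (Fin k → Polynomial F) × (Fin k → Polynomial F) //
      (∀ i, (DE.1 i).Monic) ∧ (∀ i, (DE.2 i).Monic) ∧ ∀ i, DE.1 i * DE.2 i = G i} :=
    Fintype.ofFinite _
  haveI : Fintype {DE : (Fin k → Polynomial F) × (Fin k → Polynomial F) //
      (∀ i, (DE.1 i).Monic) ∧ (∀ i, (DE.2 i).Monic) ∧ ∀ i, DE.1 i * DE.2 i = H i} :=
    Fintype.ofFinite _
  -- the bijection
  set TGH := {DE : (Fin k → Polynomial F) × (Fin k → Polynomial F) //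
      (∀ i, (DE.1 i).Monic) ∧ (∀ i, (DE.2 i).Monic) ∧ ∀ i, DE.1 i * DE.2 i = G i * H i}
    with hTGH
  set TG := {DE : (Fin k → Polynomial F) × (Fin k → Polynomial F) //
      (∀ i, (DE.1 i).Monic) ∧ (∀ i, (DE.2 i).Monic) ∧ ∀ i, DE.1 i * DE.2 i = G i} with hTG
  set TH := {DE : (Fin k → Polynomial F) × (Fin k → Polynomial F) //
      (∀ i, (DE.1 i).Monic) ∧ (∀ i, (DE.2 i).Monic) ∧ ∀ i, DE.1 i * DE.2 i = H i} with hTH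
  have Φprop : ∀ xy : TG × TH, (∀ i, ((fun i => xy.1.1.1 i * xy.2.1.1 i) i).Monic) ∧
      (∀ i, ((fun i => xy.1.1.2 i * xy.2.1.2 i) i).Monic) ∧
      ∀ i, (fun i => xy.1.1.1 i * xy.2.1.1 i) i * (fun i => xy.1.1.2 i * xy.2.1.2 i) i
        = G i * H i := by
    rintro ⟨⟨⟨D, E⟩, hD, hE, hDE⟩, ⟨⟨D', E'⟩, hD', hE', hDE'⟩⟩
    refine ⟨fun i => (hD i).mul (hD' i), fun i => (hE i).mul (hE' i), fun i => ?_⟩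
    simp only
    rw [show D i * D' i * (E i * E' i) = (D i * E i) * (D' i * E' i) by ring, hDE i, hDE' i]
  set Φ : TG × TH → TGH := fun xy =>
    ⟨(fun i => xy.1.1.1 i * xy.2.1.1 i, fun i => xy.1.1.2 i * xy.2.1.2 i), Φprop xy⟩
    with hΦ
  have hbij : Function.Bijective Φ := by
    constructor
    · intro x y h
      obtain ⟨⟨⟨D, E⟩, hD, hE, hDE⟩, ⟨⟨D', E'⟩, hD', hE', hDE'⟩⟩ := x
      obtain ⟨⟨⟨C, B⟩, hC, hB, hCB⟩, ⟨⟨C', B'⟩, hC', hB', hCB'⟩⟩ := y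
      have h1 : (fun i => D i * D' i) = (fun i => C i * C' i) :=
        congrArg (fun z : TGH => z.1.1) h
      have h2 : (fun i => E i * E' i) = (fun i => B i * B' i) :=
        congrArg (fun z : TGH => z.1.2) h
      have hDC : D = C := by
        funext i
        have hi := congrFun h1 i
        refine monic_dvd_antisymm F (hD i) (hC i) ?_ ?_
        · exact (hcop' (hdvdG i ⟨E i, (hDE i).symm⟩)
            (hdvdH i ⟨B' i, (hCB' i).symm⟩)).dvd_of_dvd_mul_right ⟨D' i, hi.symm⟩
        · exact (hcop' (hdvdG i ⟨B i, (hCB i).symm⟩)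
            (hdvdH i ⟨E' i, (hDE' i).symm⟩)).dvd_of_dvd_mul_right ⟨C' i, hi⟩
      have hEB : E = B := by
        funext i
        have hi := congrFun h2 i
        refine monic_dvd_antisymm F (hE i) (hB i) ?_ ?_
        · exact (hcop' (hdvdG i (Dvd.intro_left (D i) (hDE i)))
            (hdvdH i (Dvd.intro_left (C' i) (hCB' i)))).dvd_of_dvd_mul_right ⟨E' i, hi.symm⟩
        · exact (hcop' (hdvdG i (Dvd.intro_left (C i) (hCB i)))
            (hdvdH i (Dvd.intro_left (D' i) (hDE' i)))).dvd_of_dvd_mul_right ⟨B' i, hi⟩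
      subst hDC; subst hEB
      have hD'C' : D' = C' := funext fun i =>
        mul_left_cancel₀ (hD i).ne_zero (congrFun h1 i)
      have hE'B' : E' = B' := funext fun i =>
        mul_left_cancel₀ (hE i).ne_zero (congrFun h2 i)
      subst hD'C'; subst hE'B'
      rfl
    · rintro ⟨⟨D, E⟩, hD, hE, hDE⟩
      choose dg dh hdg hdh hdgG hdhH hsplitD using
        fun i => monic_split F (hD i) (show D i ∣ G i * H i from ⟨E i, (hDE i).symm⟩)
      choose eg eh heg heh hegG hehH hsplitE using
        fun i => monic_split F (hE i) (show E i ∣ G i * H i from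
          Dvd.intro_left (D i) (hDE i))
      have key : ∀ i, (dg i * eg i) * (dh i * eh i) = G i * H i := by
        intro i
        rw [show (dg i * eg i) * (dh i * eh i) = (dg i * dh i) * (eg i * eh i) by ring,
          hsplitD i, hsplitE i, hDE i]
      have hGi : ∀ i, dg i * eg i = G i := by
        intro i
        refine monic_dvd_antisymm F ((hdg i).mul (heg i)) (hG i) ?_ ?_
        · have c1 : IsCoprime (dg i * eg i) (H i) :=
            ((hcop.mul_left hcop).of_isCoprime_of_dvd_left
              (mul_dvd_mul (hdvdG i (hdgG i)) (hdvdG i (hegG i)))).of_isCoprime_of_dvd_right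
              (hdvdH i dvd_rfl)
          exact c1.dvd_of_dvd_mul_right ⟨dh i * eh i, (key i).symm⟩
        · have c2 : IsCoprime (G i) (dh i * eh i) :=
            ((hcop.mul_right hcop).of_isCoprime_of_dvd_left
              (hdvdG i dvd_rfl)).of_isCoprime_of_dvd_right
              (mul_dvd_mul (hdvdH i (hdhH i)) (hdvdH i (hehH i)))
          have hd : G i ∣ (dg i * eg i) * (dh i * eh i) := by
            rw [key i]; exact dvd_mul_right _ _
          exact c2.dvd_of_dvd_mul_right hd
      have hHi : ∀ i, dh i * eh i = H i := by
        intro i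
        have h1 := key i
        rw [hGi i] at h1
        exact mul_left_cancel₀ (hG i).ne_zero h1
      refine ⟨⟨⟨(dg, eg), hdg, heg, hGi⟩, ⟨(dh, eh), hdh, heh, hHi⟩⟩, ?_⟩
      apply Subtype.ext
      exact Prod.ext (funext fun i => hsplitD i) (funext fun i => hsplitE i)
  -- compatibility of summands
  have hcompat : ∀ xy : TG × TH,
      ((∏ i, (mu F (xy.1.1.1 i) : ℂ)) * f xy.1.1.2) *
      ((∏ i, (mu F (xy.2.1.1 i) : ℂ)) * f xy.2.1.2)
      = (∏ i, (mu F ((Φ xy).1.1 i) : ℂ)) * f (Φ xy).1.2 := by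
    rintro ⟨⟨⟨D, E⟩, hD, hE, hDE⟩, ⟨⟨D', E'⟩, hD', hE', hDE'⟩⟩
    simp only [hΦ]
    have hmu : ∀ i, (mu F (D i * D' i) : ℂ) = (mu F (D i) : ℂ) * (mu F (D' i) : ℂ) := by
      intro i
      rw [mu_mul F (hcop' (hdvdG i ⟨E i, (hDE i).symm⟩) (hdvdH i ⟨E' i, (hDE' i).symm⟩))
        (hD i).ne_zero (hD' i).ne_zero]
      push_cast; ring
    have hfE : f (fun i => E i * E' i) = f E * f E' :=
      hmul E E' hE hE' (hcop'
        (Finset.prod_dvd_prod_of_dvd _ _ fun i _ => Dvd.intro_left (D i) (hDE i))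
        (Finset.prod_dvd_prod_of_dvd _ _ fun i _ => Dvd.intro_left (D' i) (hDE' i)))
    simp only [hmu, hfE, Finset.prod_mul_distrib]
    ring
  have keysum : (∑ z : TGH, (∏ i, (mu F (z.1.1 i) : ℂ)) * f z.1.2)
      = (∑ x : TG, (∏ i, (mu F (x.1.1 i) : ℂ)) * f x.1.2) *
        (∑ y : TH, (∏ i, (mu F (y.1.1 i) : ℂ)) * f y.1.2) := by
    have hb := Fintype.sum_bijective Φ hbij
      (fun xy : TG × TH => ((∏ i, (mu F (xy.1.1.1 i) : ℂ)) * f xy.1.1.2) *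
        ((∏ i, (mu F (xy.2.1.1 i) : ℂ)) * f xy.2.1.2))
      (fun z : TGH => (∏ i, (mu F (z.1.1 i) : ℂ)) * f z.1.2)
      hcompat
    rw [← hb, Finset.sum_mul_sum]
    exact Fintype.sum_prod_type _
  unfold muConv
  rw [tsum_fintype, tsum_fintype, tsum_fintype]
  exact keysum


lemma isCoprime_of_no_common_prime {X Y : Polynomial F} (hX : X ≠ 0)
    (h : ∀ Q : Polynomial F, Prime Q → Q ∣ X → ¬ Q ∣ Y) : IsCoprime X Y := by
  apply IsRelPrime.isCoprime
  intro d hdX hdY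
  by_contra hu
  have hd0 : d ≠ 0 := fun h0 => hX (zero_dvd_iff.mp (h0 ▸ hdX))
  obtain ⟨q, hqirr, hqd⟩ := WfDvdMonoid.exists_irreducible_factor hu hd0
  exact h q (UniqueFactorizationMonoid.irreducible_iff_prime.mp hqirr)
    (hqd.trans hdX) (hqd.trans hdY)

lemma muConv_finprod {k m : ℕ} (f : (Fin k → Polynomial F) → ℂ)
    (hmul : ∀ G H : Fin k → Polynomial F, (∀ i, (G i).Monic) → (∀ i, (H i).Monic) →
      IsCoprime (∏ i, G i) (∏ i, H i) → f (fun i => G i * H i) = f G * f H)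
    (hf1 : f (fun _ => 1) = 1)
    (X : Fin m → (Fin k → Polynomial F)) (hX : ∀ j i, (X j i).Monic)
    (s : Finset (Fin m))
    (hpair : ∀ j ∈ s, ∀ l ∈ s, j ≠ l → IsCoprime (∏ i, X j i) (∏ i, X l i)) :
    muConv F f (fun i => ∏ j ∈ s, X j i) = ∏ j ∈ s, muConv F f (X j) := by
  induction s using Finset.induction with
  | empty =>
    simp only [Finset.prod_empty]
    rw [muConv_one F f, hf1]
  | @insert j s hj ih =>
    have hstep : (fun i => ∏ l ∈ insert j s, X l i) = fun i => X j i * ∏ l ∈ s, X l i :=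
      funext fun i => Finset.prod_insert hj
    have hcop : IsCoprime (∏ i, X j i) (∏ i, ∏ l ∈ s, X l i) := by
      rw [Finset.prod_comm]
      exact IsCoprime.prod_right fun l hl =>
        hpair j (Finset.mem_insert_self j s) l (Finset.mem_insert_of_mem hl)
          (fun hjl => hj (hjl ▸ hl))
    rw [hstep, muConv_mul F f hmul (X j) (fun i => ∏ l ∈ s, X l i) (hX j)
        (fun i => monic_prod_of_monic _ _ fun l _ => hX l i) hcop,
      ih (fun a ha b hb hab => hpair a (Finset.mem_insert_of_mem ha)
        b (Finset.mem_insert_of_mem hb) hab),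
      Finset.prod_insert hj]

lemma summable_pi_prod {M : Type*} (a : M → ℝ) (ha : Summable a) (h0 : ∀ x, 0 ≤ a x) :
    ∀ m : ℕ, Summable (fun H : Fin m → M => ∏ j, a (H j)) := by
  intro m
  induction m with
  | zero =>
    apply Summable.of_finite
  | succ n ih =>
    have hs : Summable (fun xh : M × (Fin n → M) => a xh.1 * ∏ j, a (xh.2 j)) :=
      Summable.mul_of_nonneg (f := a) (g := fun H : Fin n → M => ∏ j, a (H j))
        ha ih h0 (fun x => Finset.prod_nonneg fun j _ => h0 _)
    have he := Equiv.summable_iff (f := fun H : Fin (n + 1) → M => ∏ j, a (H j))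
      (Fin.consEquiv (fun _ : Fin (n + 1) => M))
    apply he.mp
    apply hs.congr
    intro xh
    simp [Fin.consEquiv, Fin.prod_univ_succ]

lemma multiset_prod_monic (t : Multiset (Polynomial F)) (h : ∀ p ∈ t, p.Monic) :
    t.prod.Monic := by
  revert h
  refine Multiset.induction_on t (fun _ => by simpa using monic_one) (fun a s ih h => ?_)
  rw [Multiset.prod_cons]
  exact (h a (Multiset.mem_cons_self a s)).mul (ih fun p hp => h p (Multiset.mem_cons_of_mem hp))

abbrev Mk (k : ℕ) := {G : Fin k → Polynomial F // ∀ i, (G i).Monic}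

noncomputable def aF {k : ℕ} (f : (Fin k → Polynomial F) → ℂ) (G : Mk F k) : ℝ :=
  ‖muConv F f G.1‖ / ∏ i, (anorm F (G.1 i) : ℝ)

noncomputable def piMul {k m : ℕ} (H : Fin m → Mk F k) : Mk F k :=
  ⟨fun i => ∏ j, (H j).1 i, fun i => monic_prod_of_monic _ _ fun j _ => (H j).2 i⟩

lemma anorm_prod {m : ℕ} (x : Fin m → Polynomial F) (hx : ∀ j, (x j).Monic) :
    (anorm F (∏ j, x j) : ℝ) = ∏ j, (anorm F (x j) : ℝ) := by
  unfold anorm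
  rw [Polynomial.natDegree_prod _ _ fun j _ => (hx j).ne_zero]
  push_cast
  rw [Finset.prod_pow_eq_pow_sum]

lemma key_ineq {k : ℕ} (f : (Fin k → Polynomial F) → ℂ)
    (hmul : ∀ G H : Fin k → Polynomial F, (∀ i, (G i).Monic) → (∀ i, (H i).Monic) →
      IsCoprime (∏ i, G i) (∏ i, H i) → f (fun i => G i * H i) = f G * f H)
    (hf1 : f (fun _ => 1) = 1)
    (hsum : Summable (fun H : Fin (2 ^ k) → Mk F k => ∏ j, aF F f (H j)))
    (G : Mk F k) :
    (2 : ℝ) ^ (∑ i, omega F (G.1 i)) * ‖muConv F f G.1‖ / ∏ i, (anorm F (G.1 i) : ℝ)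
      ≤ ∑' Hs : (piMul F (m := 2 ^ k)) ⁻¹' {G}, ∏ j, aF F f (Hs.1 j) := by
  set Pd : Polynomial F := ∏ i, G.1 i with hPd
  have hPdm : Pd.Monic := monic_prod_of_monic _ _ fun i _ => G.2 i
  set Ω : Finset (Polynomial F) := (normalizedFactors Pd).toFinset with hΩ
  have hΩmem : ∀ P : Polynomial F, P ∈ Ω → P ∈ normalizedFactors Pd := by
    intro P hP; exact Multiset.mem_toFinset.mp hP
  -- the class assignment construction
  set X : (↥Ω → Fin (2 ^ k)) → Fin (2 ^ k) → Mk F k := fun σ j =>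
    ⟨fun i => ∏ P ∈ Finset.univ.filter (fun P : ↥Ω => σ P = j),
        (P.1) ^ (normalizedFactors (G.1 i)).count P.1,
     fun i => monic_prod_of_monic _ _ fun P _ =>
       ((monic_of_mem_nf F (hΩmem P.1 P.2)).pow _)⟩ with hX
  -- prime factors of G i are in Ω
  have hsub : ∀ i, (normalizedFactors (G.1 i)).toFinset ⊆ Ω := by
    intro i P hP
    have hP' := Multiset.mem_toFinset.mp hP
    apply Multiset.mem_toFinset.mpr
    exact mem_nf F hPdm.ne_zero (prime_of_normalized_factor P hP')
      (normalize_normalized_factor P hP')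
      ((dvd_of_mem_normalizedFactors hP').trans
        (Finset.dvd_prod_of_mem _ (Finset.mem_univ i)))
  -- product over Ω recovers a monic divisor
  have prod_count : ∀ i, ∏ P ∈ Ω, P ^ (normalizedFactors (G.1 i)).count P = G.1 i := by
    intro i
    rw [← Finset.prod_subset (hsub i) (fun P _ hP => by
      rw [Multiset.count_eq_zero.mpr (fun h => hP (Multiset.mem_toFinset.mpr h)), pow_zero])]
    rw [← Finset.prod_multiset_count]
    exact eq_of_monic_of_associated
      (multiset_prod_monic F _ fun P hP => monic_of_mem_nf F hP) (G.2 i)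
      (prod_normalizedFactors (G.2 i).ne_zero)
  -- piMul of classes gives back G
  have hXG : ∀ σ, piMul F (X σ) = G := by
    intro σ
    apply Subtype.ext
    funext i
    show ∏ j, (X σ j).1 i = G.1 i
    simp only [hX]
    rw [Finset.prod_fiberwise Finset.univ σ
      (fun P : ↥Ω => (P.1) ^ (normalizedFactors (G.1 i)).count P.1)]
    rw [Finset.prod_coe_sort Ω (fun P => P ^ (normalizedFactors (G.1 i)).count P)]
    exact prod_count i
  -- extracting prime classes
  have classOf : ∀ (σ : ↥Ω → Fin (2 ^ k)) (j : Fin (2 ^ k)) (Q : Polynomial F), Prime Q →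
      Q ∣ ∏ i, (X σ j).1 i → ∃ P : ↥Ω, σ P = j ∧ normalize Q = P.1 := by
    intro σ j Q hQ hdvd
    obtain ⟨i, -, hdvd2⟩ := hQ.exists_mem_finset_dvd hdvd
    simp only [hX] at hdvd2
    obtain ⟨P, hPmem, hdvd3⟩ := hQ.exists_mem_finset_dvd hdvd2
    have hPj : σ P = j := (Finset.mem_filter.mp hPmem).2
    have hQP : Q ∣ P.1 := hQ.dvd_of_dvd_pow hdvd3
    have hassoc : Associated Q P.1 :=
      hQ.associated_of_dvd (prime_of_normalized_factor P.1 (hΩmem P.1 P.2)) hQP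
    refine ⟨P, hPj, ?_⟩
    rw [normalize_eq_normalize hassoc.dvd hassoc.symm.dvd,
      normalize_normalized_factor P.1 (hΩmem P.1 P.2)]
  -- pairwise coprimality of classes
  have hcopX : ∀ (σ : ↥Ω → Fin (2 ^ k)) (j l : Fin (2 ^ k)), j ≠ l →
      IsCoprime (∏ i, (X σ j).1 i) (∏ i, (X σ l).1 i) := by
    intro σ j l hjl
    apply isCoprime_of_no_common_prime F
      (monic_prod_of_monic _ _ fun i _ => (X σ j).2 i).ne_zero
    intro Q hQ hQj hQl
    obtain ⟨P, hPj, hPQ⟩ := classOf σ j Q hQ hQj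
    obtain ⟨P', hPl, hPQ'⟩ := classOf σ l Q hQ hQl
    have : P = P' := Subtype.ext (hPQ ▸ hPQ')
    exact hjl (hPj ▸ hPl ▸ this ▸ rfl)
  -- value of each class tuple product
  have hval : ∀ σ, ∏ j, aF F f (X σ j)
      = ‖muConv F f G.1‖ / ∏ i, (anorm F (G.1 i) : ℝ) := by
    intro σ
    have hg : muConv F f G.1 = ∏ j, muConv F f ((X σ j).1) := by
      have h1 : G.1 = fun i => ∏ j, (X σ j).1 i :=
        (congrArg Subtype.val (hXG σ)).symm
      rw [h1]
      exact muConv_finprod F f hmul hf1 (fun j => (X σ j).1) (fun j i => (X σ j).2 i)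
        Finset.univ (fun a _ b _ hab => hcopX σ a b hab)
    have hn : ∏ i, (anorm F (G.1 i) : ℝ) = ∏ j, ∏ i, (anorm F ((X σ j).1 i) : ℝ) := by
      rw [Finset.prod_comm]
      apply Finset.prod_congr rfl
      intro i _
      have h1 : G.1 i = ∏ j, (X σ j).1 i := congrFun (congrArg Subtype.val (hXG σ)).symm i
      rw [h1, anorm_prod F _ (fun j => (X σ j).2 i)]
    unfold aF
    rw [Finset.prod_div_distrib, ← norm_prod, ← hg, ← hn]
  -- injectivity of the class assignment map
  have hXinj : Function.Injective X := by
    intro σ τ h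
    funext P
    have hPprime : Prime P.1 := prime_of_normalized_factor P.1 (hΩmem P.1 P.2)
    have hPdvd : P.1 ∣ Pd := dvd_of_mem_normalizedFactors (hΩmem P.1 P.2)
    obtain ⟨i0, -, hdvd⟩ := hPprime.exists_mem_finset_dvd (hPd ▸ hPdvd)
    have hmem : P.1 ∈ normalizedFactors (G.1 i0) :=
      mem_nf F (G.2 i0).ne_zero hPprime (normalize_normalized_factor P.1 (hΩmem P.1 P.2)) hdvd
    have hcpos : (normalizedFactors (G.1 i0)).count P.1 ≠ 0 :=
      Multiset.count_ne_zero.mpr hmem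
    have hPdvdX : P.1 ∣ ∏ i, (X σ (σ P)).1 i := by
      refine Dvd.dvd.trans ?_ (Finset.dvd_prod_of_mem _ (Finset.mem_univ i0))
      show P.1 ∣ (X σ (σ P)).1 i0
      simp only [hX]
      exact (dvd_pow_self P.1 hcpos).trans
        (Finset.dvd_prod_of_mem _ (Finset.mem_filter.mpr ⟨Finset.mem_univ P, rfl⟩))
    rw [h] at hPdvdX
    obtain ⟨P', hP'j, hP'Q⟩ := classOf τ (σ P) P.1 hPprime hPdvdX
    have hPP' : P = P' := Subtype.ext
      (by rw [← hP'Q, normalize_normalized_factor P.1 (hΩmem P.1 P.2)])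
    have h2 := hP'j
    rw [← hPP'] at h2
    exact h2.symm
  -- sum over assignments is at most the fiber sum
  have hle2 : (∑ σ : ↥Ω → Fin (2 ^ k), ∏ j, aF F f (X σ j))
      ≤ ∑' Hs : (piMul F (m := 2 ^ k)) ⁻¹' {G}, ∏ j, aF F f (Hs.1 j) := by
    set t : (↥Ω → Fin (2 ^ k)) → ((piMul F (m := 2 ^ k)) ⁻¹' {G}) := fun σ =>
      ⟨X σ, by simp only [Set.mem_preimage, Set.mem_singleton_iff]; exact hXG σ⟩ with ht
    have htinj : ∀ x ∈ Finset.univ, ∀ y ∈ Finset.univ, t x = t y → x = y :=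
      fun x _ y _ h => hXinj (congrArg Subtype.val h)
    have himg := Finset.sum_image (s := Finset.univ) (g := t)
      (f := fun Hs : ((piMul F (m := 2 ^ k)) ⁻¹' {G}) => ∏ j, aF F f (Hs.1 j)) htinj
    have hstep : (∑ σ : ↥Ω → Fin (2 ^ k), ∏ j, aF F f (X σ j))
        = ∑ x ∈ Finset.univ.image t, ∏ j, aF F f (x.1 j) := by
      rw [himg]
    rw [hstep]
    apply Summable.sum_le_tsum
    · intro Hs _
      exact Finset.prod_nonneg fun j _ => div_nonneg (norm_nonneg _)
        (Finset.prod_nonneg fun i _ => Nat.cast_nonneg _)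
    · exact hsum.subtype _
  -- counting
  have hcard : Fintype.card (↥Ω → Fin (2 ^ k)) = (2 ^ k) ^ Ω.card := by
    rw [Fintype.card_fun, Fintype.card_coe, Fintype.card_fin]
  have hΩcard : Ω.card = omega F Pd := rfl
  have hωle : ∑ i, omega F (G.1 i) ≤ k * omega F Pd := by
    calc ∑ i, omega F (G.1 i) ≤ ∑ _i : Fin k, omega F Pd :=
          Finset.sum_le_sum fun i _ => Finset.card_le_card (hsub i)
      _ = k * omega F Pd := by rw [Finset.sum_const, Finset.card_univ, Fintype.card_fin,
          smul_eq_mul]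
  have hpow : (2 : ℝ) ^ (∑ i, omega F (G.1 i)) ≤ (2 : ℝ) ^ (k * omega F Pd) :=
    pow_le_pow_right₀ one_le_two hωle
  have hanorm_pos : (0 : ℝ) < ∏ i, (anorm F (G.1 i) : ℝ) := by
    apply Finset.prod_pos
    intro i _
    have : 0 < anorm F (G.1 i) := pow_pos Fintype.card_pos _
    exact_mod_cast this
  calc (2 : ℝ) ^ (∑ i, omega F (G.1 i)) * ‖muConv F f G.1‖ / ∏ i, (anorm F (G.1 i) : ℝ)
      ≤ (2 : ℝ) ^ (k * omega F Pd) * ‖muConv F f G.1‖ / ∏ i, (anorm F (G.1 i) : ℝ) := by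
        gcongr
    _ = (Fintype.card (↥Ω → Fin (2 ^ k)) : ℝ) *
        (‖muConv F f G.1‖ / ∏ i, (anorm F (G.1 i) : ℝ)) := by
        rw [hcard, hΩcard]
        push_cast
        rw [pow_mul, mul_div_assoc]
    _ = ∑ σ : ↥Ω → Fin (2 ^ k), ∏ j, aF F f (X σ j) := by
        rw [Finset.sum_congr rfl (fun σ _ => hval σ), Finset.sum_const, Finset.card_univ,
          nsmul_eq_mul]
    _ ≤ _ := hle2


/-- For a multiplicative `k`-variable arithmetic function `f` (not identically zero on monic
tuples, and `f(G₁H₁,…,G_kH_k) = f(G₁,…,G_k) f(H₁,…,H_k)` whenever `(G₁⋯G_k, H₁⋯H_k) = 1`),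
the weighted sum `Σ 2^(ω(G₁)+⋯+ω(G_k)) |(μ_k∗f)(G₁,…,G_k)|/(|G₁|⋯|G_k|)` is finite
iff the unweighted sum `Σ |(μ_k∗f)(G₁,…,G_k)|/(|G₁|⋯|G_k|)` is finite. -/
theorem summable_weighted_iff_summable (k : ℕ) (hk : 1 ≤ k)
    (f : (Fin k → Polynomial F) → ℂ)
    (hne : ∃ G : Fin k → Polynomial F, (∀ i, (G i).Monic) ∧ f G ≠ 0)
    (hmul : ∀ G H : Fin k → Polynomial F, (∀ i, (G i).Monic) → (∀ i, (H i).Monic) →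
      IsCoprime (∏ i, G i) (∏ i, H i) → f (fun i => G i * H i) = f G * f H) :
    Summable (fun G : {G : Fin k → Polynomial F // ∀ i, (G i).Monic} =>
      (2 : ℝ) ^ (∑ i, omega F (G.1 i)) * ‖muConv F f G.1‖ / ∏ i, (anorm F (G.1 i) : ℝ)) ↔
    Summable (fun G : {G : Fin k → Polynomial F // ∀ i, (G i).Monic} =>
      ‖muConv F f G.1‖ / ∏ i, (anorm F (G.1 i) : ℝ)) := by
  classical
  have hf1 : f (fun _ => 1) = 1 := by
    obtain ⟨G0, hG0, hfG0⟩ := hne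
    have h1 := hmul G0 (fun _ => 1) hG0 (fun _ => monic_one)
      (by rw [show (∏ i, (fun _ : Fin k => (1 : Polynomial F)) i) = 1 from by simp]
          exact isCoprime_one_right)
    have h2 : (fun i => G0 i * 1) = G0 := funext fun i => mul_one _
    rw [h2] at h1
    have h3 : f G0 * 1 = f G0 * f (fun _ => 1) := by rw [mul_one]; exact h1
    exact (mul_left_cancel₀ hfG0 h3).symm
  have hnonneg : ∀ G : Mk F k, 0 ≤ ‖muConv F f G.1‖ / ∏ i, (anorm F (G.1 i) : ℝ) :=
    fun G => div_nonneg (norm_nonneg _) (Finset.prod_nonneg fun i _ => Nat.cast_nonneg _)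
  constructor
  · intro h
    apply Summable.of_nonneg_of_le hnonneg _ h
    intro G
    have h1 : (1 : ℝ) ≤ 2 ^ (∑ i, omega F (G.1 i)) := one_le_pow₀ one_le_two
    calc ‖muConv F f G.1‖ / ∏ i, (anorm F (G.1 i) : ℝ)
        = 1 * ‖muConv F f G.1‖ / ∏ i, (anorm F (G.1 i) : ℝ) := by ring
      _ ≤ 2 ^ (∑ i, omega F (G.1 i)) * ‖muConv F f G.1‖ / ∏ i, (anorm F (G.1 i) : ℝ) := by
          gcongr
  · intro h
    have hA : Summable (aF F f) := h.congr fun G => rfl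
    have hA0 : ∀ G, 0 ≤ aF F f G := fun G => hnonneg G
    have hsum := summable_pi_prod (aF F f) hA hA0 (2 ^ k)
    have hfib := (hsum.hasSum.tsum_fiberwise (piMul F (m := 2 ^ k))).summable
    apply Summable.of_nonneg_of_le _ _ hfib
    · intro G
      exact div_nonneg (mul_nonneg (pow_nonneg (by norm_num) _) (norm_nonneg _))
        (Finset.prod_nonneg fun i _ => Nat.cast_nonneg _)
    · intro G
      exact key_ineq F f hmul hf1 hsum G
end
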